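/- Let graphs G₁ and G₂ with distinguished vertices be combined in series (identifying t₁ of G₁ with s₂ of G₂; s = s₁, t = t₂). Then s and t are connected in the combined graph if and only if s₁,t₁ are connected in G₁ and s₂,t₂ are connected in G₂. -/

import Mathlib

/-- The disjoint union of two graphs, on the sum of their vertex types. -/
def disjUnion {V₁ V₂ : Type*} (G₁ : SimpleGraph V₁) (G₂ : SimpleGraph V₂) :
    SimpleGraph (V₁ ⊕ V₂) where
  Adj a b :=
    match a, b with
    | Sum.inl x, Sum.inl y => G₁.Adj x y
    | Sum.inr x, Sum.inr y => G₂.Adj x y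
    | _, _ => False
  symm := by
    refine ⟨?_⟩
    rintro (x | x) (y | y) h <;> simp_all <;> exact h.symm
  loopless := by
    refine ⟨?_⟩
    rintro (x | x) h <;> simp_all

/-- The graph obtained from gluing the disjoint union of `G₁` and `G₂` along the
identifications given by the relation `r` on vertices: the image of the disjoint union
under the quotient map `Quot.mk r`. -/
def glueGraph {V₁ V₂ : Type*} (G₁ : SimpleGraph V₁) (G₂ : SimpleGraph V₂)
    (r : V₁ ⊕ V₂ → V₁ ⊕ V₂ → Prop) : SimpleGraph (Quot r) :=
  SimpleGraph.fromRel (fun x y =>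
    ∃ a b : V₁ ⊕ V₂, (disjUnion G₁ G₂).Adj a b ∧ x = Quot.mk r a ∧ y = Quot.mk r b)

/-- The identification for the series combination: `t₁` with `s₂`. -/
def seriesRel {V₁ V₂ : Type*} (t₁ : V₁) (s₂ : V₂) :
    V₁ ⊕ V₂ → V₁ ⊕ V₂ → Prop := fun a b =>
  a = Sum.inl t₁ ∧ b = Sum.inr s₂

private lemma reach_map {V W : Type*} {G : SimpleGraph V} {H : SimpleGraph W} (f : V → W)
    (hf : ∀ a b, G.Adj a b → H.Reachable (f a) (f b)) {x y : V} (h : G.Reachable x y) :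
    H.Reachable (f x) (f y) := by
  obtain ⟨w⟩ := h
  induction w with
  | nil => exact SimpleGraph.Reachable.refl _
  | cons h p ih => exact (hf _ _ h).trans ih

private lemma reach_ind {V : Type*} {G : SimpleGraph V} (P : V → Prop)
    (hP : ∀ a b, G.Adj a b → P a → P b) {x y : V} (h : G.Reachable x y) : P x → P y := by
  obtain ⟨w⟩ := h
  induction w with
  | nil => exact id
  | cons h p ih => exact fun hx => ih (hP _ _ h hx)

/-- Series combination: identifying `t₁` of `G₁` with `s₂` of `G₂`, the combined graph
connects `s = s₁` to `t = t₂` iff `s₁, t₁` are connected in `G₁` and `s₂, t₂` are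
connected in `G₂`. -/
theorem series_reachable_iff {V₁ V₂ : Type*} (G₁ : SimpleGraph V₁) (G₂ : SimpleGraph V₂)
    (s₁ t₁ : V₁) (s₂ t₂ : V₂) :
    (glueGraph G₁ G₂ (seriesRel t₁ s₂)).Reachable
        (Quot.mk _ (Sum.inl s₁)) (Quot.mk _ (Sum.inr t₂)) ↔
      G₁.Reachable s₁ t₁ ∧ G₂.Reachable s₂ t₂ := by
  set r := seriesRel t₁ s₂ with hr
  constructor
  · intro h
    -- invariant
    let g : V₁ ⊕ V₂ → Prop := fun a =>
      match a with
      | Sum.inl x => G₁.Reachable s₁ x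
      | Sum.inr y => G₁.Reachable s₁ t₁ ∧ G₂.Reachable s₂ y
    have hg : ∀ a b, r a b → g a = g b := by
      rintro a b ⟨rfl, rfl⟩
      show (G₁.Reachable s₁ t₁) = (G₁.Reachable s₁ t₁ ∧ G₂.Reachable s₂ s₂)
      exact propext ⟨fun h => ⟨h, SimpleGraph.Reachable.refl _⟩, And.left⟩
    let P : Quot r → Prop := Quot.lift g hg
    have key : ∀ (a b : V₁ ⊕ V₂), (disjUnion G₁ G₂).Adj a b →
        P (Quot.mk r a) → P (Quot.mk r b) := by
      rintro (x | x) (y | y) hadj hp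
      · have hp' : G₁.Reachable s₁ x := hp
        show G₁.Reachable s₁ y
        exact hp'.trans (SimpleGraph.Adj.reachable hadj)
      · exact hadj.elim
      · exact hadj.elim
      · have hp' : G₁.Reachable s₁ t₁ ∧ G₂.Reachable s₂ x := hp
        show G₁.Reachable s₁ t₁ ∧ G₂.Reachable s₂ y
        exact ⟨hp'.1, hp'.2.trans (SimpleGraph.Adj.reachable hadj)⟩
    have step : ∀ u v, (glueGraph G₁ G₂ r).Adj u v → P u → P v := by
      rintro u v ⟨hne, ⟨a, b, hab, rfl, rfl⟩ | ⟨a, b, hab, rfl, rfl⟩⟩ hu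
      · exact key a b hab hu
      · exact key b a ((disjUnion G₁ G₂).adj_symm hab) hu
    have := reach_ind P step h (SimpleGraph.Reachable.refl s₁)
    exact this
  · rintro ⟨h1, h2⟩
    have e : (Quot.mk r (Sum.inl t₁) : Quot r) = Quot.mk r (Sum.inr s₂) :=
      Quot.sound ⟨rfl, rfl⟩
    have lift1 : (glueGraph G₁ G₂ r).Reachable (Quot.mk r (Sum.inl s₁))
        (Quot.mk r (Sum.inl t₁)) := by
      refine reach_map (fun x => Quot.mk r (Sum.inl x)) ?_ h1
      intro a b hab
      by_cases heq : (Quot.mk r (Sum.inl a) : Quot r) = Quot.mk r (Sum.inl b)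
      · show (glueGraph G₁ G₂ r).Reachable (Quot.mk r (Sum.inl a)) (Quot.mk r (Sum.inl b))
        rw [heq]
      · exact SimpleGraph.Adj.reachable
          ⟨heq, Or.inl ⟨Sum.inl a, Sum.inl b, hab, rfl, rfl⟩⟩
    have lift2 : (glueGraph G₁ G₂ r).Reachable (Quot.mk r (Sum.inr s₂))
        (Quot.mk r (Sum.inr t₂)) := by
      refine reach_map (fun x => Quot.mk r (Sum.inr x)) ?_ h2
      intro a b hab
      by_cases heq : (Quot.mk r (Sum.inr a) : Quot r) = Quot.mk r (Sum.inr b)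
      · show (glueGraph G₁ G₂ r).Reachable (Quot.mk r (Sum.inr a)) (Quot.mk r (Sum.inr b))
        rw [heq]
      · exact SimpleGraph.Adj.reachable
          ⟨heq, Or.inl ⟨Sum.inr a, Sum.inr b, hab, rfl, rfl⟩⟩
    exact lift1.trans (e ▸ lift2)
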